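/- Let k and n be positive integers and m = kn+1. For every D ∈ D_{m,n}, the filling algorithm applied to the step word of D never halts prematurely: at every stage i ≤ m+n−1 at which the i-th letter is W, at least one active entry exists, so the algorithm successfully places all of 1,2,…,m+n−1 and produces a complete filling of the (k+1)×n array. -/

import Mathlib

open scoped Classical

/-- Number of North steps (letters `true`) among the first `i` letters of `w`. -/
def upCount (w : List Bool) (i : ℕ) : ℕ := (w.take i).count true

/-- Number of East steps (letters `false`) among the first `i` letters of `w`. -/
def rightCount (w : List Bool) (i : ℕ) : ℕ := (w.take i).count false

/-- `w` is an `(m,n)`-Dyck path: a word with `n` North letters (`true`) and `m` East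
letters (`false`), each of whose prefixes with `b` North and `a` East letters
satisfies `b*m - a*n ≥ 0`. -/
def IsDyck (m n : ℕ) (w : List Bool) : Prop :=
  w.length = m + n ∧ w.count true = n ∧
  ∀ i, n * rightCount w i ≤ m * upCount w i

/-- The rank of the `(i+1)`-st step (0-indexed `i`) of `w`, namely `b*m - a*n` where
`b` and `a` are the numbers of North and East letters among the first `i` letters. -/
def rank (m n : ℕ) (w : List Bool) (i : ℕ) : ℤ :=
  (m : ℤ) * upCount w i - (n : ℤ) * rightCount w i

/-- The sweep map: list the steps of `w` in increasing order of their ranks. -/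
def sweep (m n : ℕ) (w : List Bool) : List Bool :=
  (((List.range w.length).mergeSort
      (fun i j => decide (rank m n w i ≤ rank m n w j))).map
    (fun i => w.getD i false))

/-- The word `EN(w)`: list the steps of `w` in increasing order of their end ranks
(the end rank of the `(i+1)`-st step is `rank w (i+1)`). -/
def sweepEN (m n : ℕ) (w : List Bool) : List Bool :=
  (((List.range w.length).mergeSort
      (fun i j => decide (rank m n w (i + 1) ≤ rank m n w (j + 1)))).map
    (fun i => w.getD i false))

/-- One step of the filling algorithm: place entry `p.1` according to letter `p.2`
(`true` = S : start a new column; `false` = W : put it below the smallest active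
entry, an active entry being the current bottom entry of a column of height `< k+1`). -/
def fillStep (k : ℕ) (cols : List (List ℕ)) (p : ℕ × Bool) : List (List ℕ) :=
  if p.2 then cols ++ [[p.1]]
  else
    match ((List.range cols.length).filter
        (fun j => (cols.getD j []).length < k + 1)).argmin
        (fun j => (cols.getD j []).getLastD 0) with
    | none => cols
    | some j => cols.set j ((cols.getD j []) ++ [p.1])

/-- The state (list of columns, each recorded top to bottom) of the filling algorithm
after the entries `1, …, t` have been placed according to the first `t` letters of `w`. -/
def fillColsUpTo (k : ℕ) (w : List Bool) (t : ℕ) : List (List ℕ) :=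
  ((List.range t).map (fun i => (i + 1, w.getD i false))).foldl (fillStep k) []

/-- The final state of the filling algorithm on the word `w` (entries
`1, …, m+n-1` placed, i.e. all letters but the last one processed). -/
def fillCols (k : ℕ) (w : List Bool) : List (List ℕ) :=
  fillColsUpTo k w (w.length - 1)

/-- The tableau `T(D)` produced by the filling algorithm, as a function
(row, column) ↦ entry, rows and columns 0-indexed. -/
def fillTableau (k n : ℕ) (w : List Bool) : Fin (k + 1) → Fin n → ℕ :=
  fun i j => ((fillCols k w).getD j []).getD i 0

/-- `T` fills the `(k+1) × n` array with `1, …, (k+1)n`, increasing along rows and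
columns. -/
def IsFilling (k n : ℕ) (T : Fin (k + 1) → Fin n → ℕ) : Prop :=
  (∀ i j, T i j ∈ Finset.Icc 1 ((k + 1) * n)) ∧
  Function.Injective (fun p : Fin (k + 1) × Fin n => T p.1 p.2) ∧
  (∀ i, StrictMono (T i)) ∧
  (∀ j, StrictMono (fun i => T i j))

/-- For all entries `a < b < c < d` of `T` with `d` directly below `a`, the entries
`b` and `c` do not lie in the same column. -/
def NoBadQuadruple (k n : ℕ) (T : Fin (k + 1) → Fin n → ℕ) : Prop :=
  ∀ (i : Fin (k + 1)) (hi : (i : ℕ) + 1 < k + 1) (j : Fin n)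
    (r r' : Fin (k + 1)) (c : Fin n), r < r' →
      ¬ (T i j < T r c ∧ T r c < T r' c ∧ T r' c < T ⟨(i : ℕ) + 1, hi⟩ j)

/-- The family `𝒯ₙᵏ` of tableaux. -/
def IsFussTableau (k n : ℕ) (T : Fin (k + 1) → Fin n → ℕ) : Prop :=
  IsFilling k n T ∧ NoBadQuadruple k n T

/-- A value `r` is marked for `T` when `r - 1` is a bottom-row entry of `T`. -/
def Marked (k n : ℕ) (T : Fin (k + 1) → Fin n → ℕ) (r : ℕ) : Prop :=
  ∃ j : Fin n, T (Fin.last k) j + 1 = r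

/-- One move of the walk `w(T)` on the values `1, …, M` (where `M = m + n`):
from a row-1 entry `x` move to `r + 1` where `r` is the bottom entry of the column
of `x`; from an entry `x` of one of the rows `2, …, k+1` move to the largest
unmarked value `≤ r`, where `r` is the entry directly above `x`; from `x = M`
move to the largest unmarked value `< M`. -/
noncomputable def walkStep (k n M : ℕ) (T : Fin (k + 1) → Fin n → ℕ) (x : ℕ) : ℕ :=
  if h : ∃ j : Fin n, T 0 j = x then
    T (Fin.last k) (Classical.choose h) + 1
  else if h2 : ∃ p : Fin (k + 1) × Fin n, T p.1 p.2 = x then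
    let p := Classical.choose h2
    ((((Finset.Icc 1 M).filter
        (fun y => y ≤ T (⟨(p.1 : ℕ) - 1, lt_of_le_of_lt (Nat.sub_le _ _) p.1.2⟩ : Fin (k + 1)) p.2
          ∧ ¬ Marked k n T y))).max).getD 0
  else
    ((((Finset.Icc 1 M).filter (fun y => y < M ∧ ¬ Marked k n T y))).max).getD 0

/-- The area of the path `w`: the number of lattice cells of the `m × n` rectangle
lying below the path whose interiors lie entirely above the diagonal.
The cell in column `x` and row `y` (0-indexed) has its interior above the diagonal
iff `n*(x+1) ≤ m*y`, and lies below the path iff the `(y+1)`-st North step of `w`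
occurs before the `(x+1)`-st East step. -/
def nthLetterIdx (w : List Bool) (b : Bool) (j : ℕ) : ℕ :=
  (((List.range w.length).filter (fun i => w.getD i false = b))).getD j 0

def area (m n : ℕ) (w : List Bool) : ℕ :=
  ((Finset.range m ×ˢ Finset.range n).filter
    (fun p => n * (p.1 + 1) ≤ m * p.2 ∧
      nthLetterIdx w true p.2 < nthLetterIdx w false p.1)).card

/-- The reduction `red(T)`: delete column 1 and replace each remaining entry `i` by
`i` minus the number of column-1 entries smaller than `i`. -/
def red (k n : ℕ) (T : Fin (k + 1) → Fin n → ℕ) : Fin (k + 1) → Fin (n - 1) → ℕ :=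
  fun i j =>
    let v := T i ⟨(j : ℕ) + 1, by have := j.2; omega⟩
    v - (Finset.univ.filter
      (fun u : Fin (k + 1) => T u ⟨0, by have := j.2; omega⟩ < v)).card

/-- The (finite) set of `(m,n)`-Dyck paths as a `Finset` of words. -/
noncomputable def dyckFinset (m n : ℕ) : Finset (List Bool) :=
  ((Finset.univ : Finset (Fin (m + n) → Bool)).image List.ofFn).filter
    (fun w => IsDyck m n w)

/-! ### Auxiliary lemmas for statement 7 -/

lemma count_true_add_count_false (l : List Bool) :
    l.count true + l.count false = l.length := by
  induction l with
  | nil => simp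
  | cons a l ih => cases a <;> simp [List.count_cons] <;> omega

lemma take_succ_getD (w : List Bool) (t : ℕ) (ht : t < w.length) :
    w.take (t + 1) = w.take t ++ [w.getD t false] := by
  rw [List.take_succ, List.getD_eq_getElem _ _ ht, List.getElem?_eq_getElem ht]
  rfl

lemma upCount_succ (w : List Bool) (t : ℕ) (ht : t < w.length) :
    upCount w (t + 1) = upCount w t + (if w.getD t false = true then 1 else 0) := by
  unfold upCount
  rw [take_succ_getD w t ht, List.count_append]
  cases h : w.getD t false <;> simp [h]

lemma rightCount_succ (w : List Bool) (t : ℕ) (ht : t < w.length) :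
    rightCount w (t + 1) = rightCount w t + (if w.getD t false = false then 1 else 0) := by
  unfold rightCount
  rw [take_succ_getD w t ht, List.count_append]
  cases h : w.getD t false <;> simp [h]

lemma counts_sum (w : List Bool) (t : ℕ) (ht : t ≤ w.length) :
    upCount w t + rightCount w t = t := by
  unfold upCount rightCount
  rw [count_true_add_count_false, List.length_take]
  omega

lemma upCount_le (w : List Bool) (t : ℕ) : upCount w t ≤ w.count true :=
  (List.take_sublist t w).count_le true

lemma fillColsUpTo_succ (k : ℕ) (w : List Bool) (t : ℕ) :
    fillColsUpTo k w (t + 1) =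
      fillStep k (fillColsUpTo k w t) (t + 1, w.getD t false) := by
  simp [fillColsUpTo, List.range_succ]

lemma sum_map_length_set : ∀ (l : List (List ℕ)) (j : ℕ) (v : List ℕ), j < l.length →
    ((l.set j v).map List.length).sum + (l.getD j []).length
      = (l.map List.length).sum + v.length := by
  intro l
  induction l with
  | nil => intro j v h; simp at h
  | cons a l ih =>
    intro j v h
    cases j with
    | zero => simp; omega
    | succ j =>
      have := ih j v (by simpa using Nat.lt_of_succ_lt_succ h)
      simp only [List.set, List.getD_cons_succ, List.map_cons, List.sum_cons]
      omega

lemma list_sum_const (K : ℕ) : ∀ (l : List ℕ), (∀ x ∈ l, x = K) → l.sum = l.length * K := by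
  intro l
  induction l with
  | nil => simp
  | cons a l ih =>
    intro h
    have ha := h a (by simp)
    have := ih (fun x hx => h x (by simp [hx]))
    simp only [List.sum_cons, List.length_cons]
    rw [this, ha]; ring

lemma list_sum_le (K : ℕ) : ∀ (l : List ℕ), (∀ x ∈ l, x ≤ K) → l.sum ≤ l.length * K := by
  intro l
  induction l with
  | nil => simp
  | cons a l ih =>
    intro h
    have ha := h a (by simp)
    have h2 := ih (fun x hx => h x (by simp [hx]))
    simp only [List.sum_cons, List.length_cons]
    have : (l.length + 1) * K = l.length * K + K := by ring
    rw [this]; omega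

lemma list_all_eq (K : ℕ) : ∀ (l : List ℕ), (∀ x ∈ l, x ≤ K) →
    l.sum = l.length * K → ∀ x ∈ l, x = K := by
  intro l
  induction l with
  | nil => simp
  | cons a l ih =>
    intro hle hsum x hx
    have ha := hle a (by simp)
    have h2 := list_sum_le K l (fun x hx => hle x (by simp [hx]))
    have h3 : (l.length + 1) * K = l.length * K + K := by ring
    simp only [List.sum_cons, List.length_cons, h3] at hsum
    have haK : a = K := by omega
    have hl : l.sum = l.length * K := by omega
    rcases List.mem_cons.mp hx with rfl | hx
    · exact haK
    · exact ih (fun x hx => hle x (by simp [hx])) hl x hx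

/-- If all columns were full before an East step strictly before the last stage,
the Dyck condition would be violated. -/
lemma nonstall (k n m : ℕ) (hk : 0 < k) (hn : 0 < n) (hm : m = k * n + 1)
    (D : List Bool) (hD : IsDyck m n D) (t : ℕ) (ht : t < m + n - 1)
    (cols : List (List ℕ))
    (hlen : cols.length = upCount D t)
    (hsum : (cols.map List.length).sum = t)
    (hle : ∀ c ∈ cols, c.length ≤ k + 1)
    (hf : D.getD t false = false) :
    ∃ j < cols.length, (cols.getD j []).length < k + 1 := by
  by_contra hcon
  push_neg at hcon
  have hall : ∀ c ∈ cols, c.length = k + 1 := by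
    intro c hc
    obtain ⟨j, hj, rfl⟩ := List.mem_iff_getElem.mp hc
    have h1 := hcon j hj
    rw [List.getD_eq_getElem _ _ hj] at h1
    exact le_antisymm (hle _ hc) h1
  have hm1 : 0 < m := by rw [hm]; exact Nat.succ_pos _
  have hlenD : D.length = m + n := hD.1
  have htD : t < D.length := by omega
  have htD' : t + 1 ≤ D.length := by omega
  set b := upCount D t with hb
  have hsum2 : (cols.map List.length).sum = cols.length * (k + 1) := by
    rw [list_sum_const (k + 1) _ (fun x hx => by
      obtain ⟨c, hc, rfl⟩ := List.mem_map.mp hx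
      exact hall c hc), List.length_map]
  have htb : t = b * (k + 1) := by rw [← hsum, hsum2, hlen]
  have hbn : b ≤ n := by
    have := upCount_le D t
    rw [hD.2.1] at this
    exact this
  have hcs : b + rightCount D t = t := counts_sum D t (le_of_lt htD)
  have hr : rightCount D t = b * k := by
    have e : b * (k + 1) = b * k + b := by ring
    omega
  have hdy := hD.2.2 (t + 1)
  rw [rightCount_succ D t htD, upCount_succ D t htD, hf] at hdy
  simp at hdy
  rw [hr, hm] at hdy
  -- hdy : n * (b * k + 1) ≤ (k * n + 1) * b
  have hnb : n ≤ b := by nlinarith [hdy]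
  have hbe : b = n := le_antisymm hbn hnb
  have e3 : b * (k + 1) = k * n + n := by rw [hbe]; ring
  have : t = k * n + n := by omega
  rw [hm] at ht
  omega

/-- Main invariant of the filling algorithm. -/
lemma fill_invariant (k n m : ℕ) (hk : 0 < k) (hn : 0 < n) (hm : m = k * n + 1)
    (D : List Bool) (hD : IsDyck m n D) :
    ∀ t, t ≤ m + n - 1 →
      (fillColsUpTo k D t).length = upCount D t ∧
      ((fillColsUpTo k D t).map List.length).sum = t ∧
      ∀ c ∈ fillColsUpTo k D t, c.length ≤ k + 1 := by
  have hm1 : 0 < m := by rw [hm]; exact Nat.succ_pos _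
  have hlenD : D.length = m + n := hD.1
  intro t
  induction t with
  | zero => intro _; refine ⟨?_, ?_, ?_⟩ <;> simp [fillColsUpTo, upCount]
  | succ t ih =>
    intro ht1
    have ht : t < m + n - 1 := by omega
    obtain ⟨h1, h2, h3⟩ := ih (by omega)
    have htD : t < D.length := by omega
    rw [fillColsUpTo_succ]
    set cols := fillColsUpTo k D t with hcols
    cases hbl : D.getD t false with
    | true =>
      have hstep : fillStep k cols (t + 1, true) = cols ++ [[t + 1]] := rfl
      rw [hstep]
      refine ⟨?_, ?_, ?_⟩
      · rw [List.length_append, upCount_succ D t htD, hbl, h1]; simp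
      · simp [h2]
      · intro c hc
        rcases List.mem_append.mp hc with hc | hc
        · exact h3 c hc
        · simp at hc; subst hc; simp
    | false =>
      obtain ⟨j, hj, hjl⟩ := nonstall k n m hk hn hm D hD t ht cols h1 h2 h3 hbl
      have hmem : j ∈ (List.range cols.length).filter
          (fun j => decide ((cols.getD j []).length < k + 1)) := by
        simp only [List.mem_filter, List.mem_range, decide_eq_true_eq]
        exact ⟨hj, hjl⟩
      cases hA : ((List.range cols.length).filter
          (fun j => decide ((cols.getD j []).length < k + 1))).argmin
          (fun j => (cols.getD j []).getLastD 0) with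
      | none =>
        rw [List.argmin_eq_none] at hA
        rw [hA] at hmem
        exact absurd hmem List.not_mem_nil
      | some j' =>
        have hj'mem := List.argmin_mem hA
        simp only [List.mem_filter, List.mem_range, decide_eq_true_eq] at hj'mem
        obtain ⟨hj', hj'l⟩ := hj'mem
        have hstep : fillStep k cols (t + 1, false)
            = cols.set j' ((cols.getD j' []) ++ [t + 1]) := by
          unfold fillStep
          rw [hA]
          simp
        rw [hstep]
        refine ⟨?_, ?_, ?_⟩
        · rw [List.length_set, upCount_succ D t htD, hbl, h1]; simp
        · have := sum_map_length_set cols j' ((cols.getD j' []) ++ [t + 1]) hj'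
          rw [h2] at this
          simp only [List.length_append, List.length_cons, List.length_nil] at this
          omega
        · intro c hc
          rcases List.mem_or_eq_of_mem_set hc with hc | hc
          · exact h3 c hc
          · subst hc
            simp only [List.length_append, List.length_cons, List.length_nil]
            omega

/-- For `m = kn+1` and `D ∈ 𝒟_{m,n}`, the filling algorithm never
halts prematurely: at every stage at which the next letter is `W` there is an
active entry, and the algorithm produces a complete filling of the `(k+1) × n`
array. -/
theorem statement7 (k n : ℕ) (hk : 0 < k) (hn : 0 < n) (m : ℕ) (hm : m = k * n + 1)
    (D : List Bool) (hD : IsDyck m n D) :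
    (∀ t < m + n - 1, D.getD t false = false →
      ∃ j < (fillColsUpTo k D t).length,
        ((fillColsUpTo k D t).getD j []).length < k + 1) ∧
    (fillCols k D).length = n ∧
    (∀ j < n, ((fillCols k D).getD j []).length = k + 1) := by
  have hm1 : 0 < m := by rw [hm]; exact Nat.succ_pos _
  have hlenD : D.length = m + n := hD.1
  have hinv := fill_invariant k n m hk hn hm D hD
  refine ⟨?_, ?_⟩
  · intro t ht hf
    obtain ⟨h1, h2, h3⟩ := hinv t (by omega)
    exact nonstall k n m hk hn hm D hD t ht _ h1 h2 h3 hf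
  have hfc : fillCols k D = fillColsUpTo k D (m + n - 1) := by
    unfold fillCols; rw [hlenD]
  obtain ⟨h1, h2, h3⟩ := hinv (m + n - 1) le_rfl
  have hup : upCount D (m + n) = n := by
    unfold upCount; rw [← hlenD, List.take_length]; exact hD.2.1
  have htD : m + n - 1 < D.length := by omega
  have hsucc : m + n - 1 + 1 = m + n := by omega
  -- the last letter is an East step
  have hlast : D.getD (m + n - 1) false = false := by
    by_contra hcon
    have hbl : D.getD (m + n - 1) false = true := by
      cases h : D.getD (m + n - 1) false
      · exact absurd h hcon
      · rfl
    have h4 := upCount_succ D (m + n - 1) htD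
    rw [hbl, hsucc] at h4
    simp only [if_true] at h4
    have hb : upCount D (m + n - 1) = n - 1 := by omega
    have hcs := counts_sum D (m + n - 1) (by omega)
    have hr : rightCount D (m + n - 1) = m := by omega
    have hdy := hD.2.2 (m + n - 1)
    rw [hb, hr] at hdy
    have e : m * (n - 1) + m = m * n := by
      have h5 : n - 1 + 1 = n := by omega
      calc m * (n - 1) + m = m * ((n - 1) + 1) := by ring
        _ = m * n := by rw [h5]
    have c : n * m = m * n := Nat.mul_comm n m
    linarith
  have h4 := upCount_succ D (m + n - 1) htD
  rw [hlast, hsucc] at h4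
  simp only [Bool.false_eq_true, if_false] at h4
  have hupl : upCount D (m + n - 1) = n := by omega
  have hlen' : (fillColsUpTo k D (m + n - 1)).length = n := by rw [h1, hupl]
  have hmn : m + n - 1 = n * (k + 1) := by
    have h5 : m + n = n * (k + 1) + 1 := by rw [hm]; ring
    omega
  refine ⟨by rw [hfc, hlen'], ?_⟩
  intro j hj
  set cols := fillColsUpTo k D (m + n - 1) with hcols
  have hsum' : (cols.map List.length).sum = (cols.map List.length).length * (k + 1) := by
    rw [h2, List.length_map, hlen', hmn]
  have hall := list_all_eq (k + 1) (cols.map List.length)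
    (fun x hx => by
      obtain ⟨c, hc, rfl⟩ := List.mem_map.mp hx
      exact h3 c hc) hsum'
  have hjlen : j < cols.length := by rw [hlen']; exact hj
  rw [hfc, List.getD_eq_getElem _ _ hjlen]
  exact hall _ (List.mem_map.mpr ⟨cols[j], List.getElem_mem hjlen, rfl⟩)
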